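/- Let X be a topological space, κ : I → 𝕍(X) a net converging to K in the Vietoris space 𝕍(X), and b : I → X a net with bᵢ ∈ κᵢ for every i ∈ I. Then there exists x ∈ K which is a cluster point of the net b, i.e. for every open neighborhood U of x and every i ∈ I there exists j ≥ i with b_j ∈ U (in Lean: MapClusterPt x Filter.atTop b); equivalently, some subnet of b converges to x. -/

import Mathlib

/-- The (compact) Vietoris space over `X`: the compact subsets of `X`. -/
def Vietoris (X : Type*) [TopologicalSpace X] : Type _ :=
  {K : Set X // IsCompact K}

/-- The Vietoris topology, generated by the subbase of all sets
`⟨O⟩ = {K | K ∩ O ≠ ∅}` and `[O] = {K | K ⊆ O}` for `O` open. -/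
instance Vietoris.topologicalSpace (X : Type*) [TopologicalSpace X] :
    TopologicalSpace (Vietoris X) :=
  TopologicalSpace.generateFrom
    ({S | ∃ O : Set X, IsOpen O ∧ S = {K : Vietoris X | (K.1 ∩ O).Nonempty}} ∪
     {S | ∃ O : Set X, IsOpen O ∧ S = {K : Vietoris X | K.1 ⊆ O}})

/-- If `κᵢ → K` in the Vietoris space and `bᵢ ∈ κᵢ` for all `i`, then the net
`b` has a cluster point in `K` (equivalently, a subnet of `b` converges to a
point of `K`). -/
theorem vietoris_clusterPt {X : Type u} [TopologicalSpace X]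
    {I : Type w} [PartialOrder I] [IsDirected I (· ≤ ·)] [Nonempty I]
    (κ : I → Vietoris X) (K : Vietoris X)
    (hκ : Filter.Tendsto κ Filter.atTop (nhds K))
    (b : I → X) (hb : ∀ i, b i ∈ (κ i).1) :
    ∃ x ∈ K.1, MapClusterPt x Filter.atTop b := by
  by_contra h
  push_neg at h
  have hV : ∀ x ∈ K.1, ∃ V : Set X, IsOpen V ∧ x ∈ V ∧ ∀ᶠ j in Filter.atTop, b j ∉ V := by
    intro x hx
    have hx' := h x hx
    rw [mapClusterPt_iff_frequently] at hx'
    push_neg at hx'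
    obtain ⟨s, hs, hfreq⟩ := hx'
    obtain ⟨V, hVs, hVopen, hxV⟩ := mem_nhds_iff.mp hs
    refine ⟨V, hVopen, hxV, ?_⟩
    exact hfreq.mono fun j hj hjV => hj (hVs hjV)
  choose! V hVopen hxV hVev using hV
  obtain ⟨t, htK, hcover⟩ := K.2.elim_nhds_subcover V
    (fun x hx => (hVopen x hx).mem_nhds (hxV x hx))
  set O : Set X := ⋃ x ∈ t, V x with hO
  have hOopen : IsOpen O := isOpen_biUnion fun x hx => hVopen x (htK x hx)
  have hSopen : IsOpen {K' : Vietoris X | K'.1 ⊆ O} :=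
    TopologicalSpace.isOpen_generateFrom_of_mem (Or.inr ⟨O, hOopen, rfl⟩)
  have hmem : {K' : Vietoris X | K'.1 ⊆ O} ∈ nhds K := hSopen.mem_nhds hcover
  have h1 : ∀ᶠ j in Filter.atTop, (κ j).1 ⊆ O := hκ hmem
  have h2 : ∀ᶠ j in Filter.atTop, ∀ x ∈ t, b j ∉ V x := by
    rw [Filter.eventually_all_finset]
    exact fun x hx => hVev x (htK x hx)
  obtain ⟨j, hj1, hj2⟩ := (h1.and h2).exists
  obtain ⟨x, hx, hbx⟩ := Set.mem_iUnion₂.mp (hj1 (hb j))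
  exact hj2 x hx hbx
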